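/- Let γ′_1,…,γ′_n be (ε)-contours at a configuration τ in Λ(l) with γ′_j ∩ ∂Q(Λ(l)) = ∅ for all j. Then Δ_{γ′_1,…,γ′_n} H^ω_{Λ(l)}(τ) = 2∑_{j=1}^n |γ′_j|. -/

import Mathlib

open Finset

/-! ### Basic lattice notions for the 2-D Ising model on the square Λ(l) -/

abbrev Site := ℤ × ℤ

/-- `l¹`-distance on `ℤ²`. -/
def d1 (x y : Site) : ℤ := |x.1 - y.1| + |x.2 - y.2|

/-- `l∞`-distance on `ℤ²`. -/
def dinf (x y : Site) : ℤ := max |x.1 - y.1| |x.2 - y.2|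

/-- There is a path from `x` to `y` inside `S` with steps of `d`-distance 1. -/
def ChainIn (d : Site → Site → ℤ) (S : Set Site) (x y : Site) : Prop :=
  ∃ L : List Site, L.Chain' (fun a b => d a b = 1) ∧ L.head? = some x ∧
    L.getLast? = some y ∧ ∀ a ∈ L, a ∈ S

/-- `S` is connected with respect to steps of `d`-distance 1. -/
def ConnIn (d : Site → Site → ℤ) (S : Set Site) : Prop :=
  ∀ x ∈ S, ∀ y ∈ S, ChainIn d S x y

def lamLo (l : ℕ) : ℤ := 1 - (((l + 1) / 2 : ℕ) : ℤ)
def lamHi (l : ℕ) : ℤ := ((l / 2 : ℕ) : ℤ)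

/-- The lamBox the box. -/
noncomputable def lamBox (l : ℕ) : Finset Site := Finset.Icc (lamLo l, lamLo l) (lamHi l, lamHi l)

/-- The exterior boundary `∂_ex Λ(l)`. -/
def extBdry (l : ℕ) : Set Site := {y | y ∉ lamBox l ∧ ∃ x ∈ lamBox l, d1 x y = 1}

/-- An interval of `∂_ex Λ(l)` : an `l∞`-connected subset of it. -/
def IsBdryInterval (l : ℕ) (I : Finset Site) : Prop :=
  (↑I : Set Site) ⊆ extBdry l ∧ ConnIn dinf ↑I

/-- The four nearest neighbours of a site. -/
def nbrs (x : Site) : Finset Site :=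
  {(x.1 + 1, x.2), (x.1 - 1, x.2), (x.1, x.2 + 1), (x.1, x.2 - 1)}

/-- A dual bond, recorded by its two endpoints `v`, a dual vertex `v` standing for the
point `v + (1/2, 1/2)` of the dual lattice. -/
abbrev DBond := Sym2 Site

/-- The dual bond of the nearest-neighbour bond `{x, y}`. -/
def dualBond (x y : Site) : DBond :=
  if x.2 = y.2 then s((min x.1 y.1, x.2 - 1), (min x.1 y.1, x.2))
  else s((x.1 - 1, min x.2 y.2), (x.1, min x.2 y.2))

/-- `∂Q(Θ)` : the set of dual bonds separating `Θ` from its complement. -/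
def contourOf (Θ : Finset Site) : Finset DBond :=
  Θ.biUnion fun x => ((nbrs x).filter (· ∉ Θ)).image fun y => dualBond x y

/-- `Θ` and its complement are `l¹`-connected, so that `∂Q(Θ)` is a contour. -/
def IsContourRegion (Θ : Finset Site) : Prop :=
  ConnIn d1 ↑Θ ∧ ConnIn d1 ((↑Θ : Set Site)ᶜ)

/-- `∂Q(Λ(l))`, as a set of dual bonds. -/
noncomputable def boxBdry (l : ℕ) : Finset DBond := contourOf (lamBox l)

/-- The dual vertex `v` lies on the side `F_l^j` of `Q(Λ(l))` (`j ∈ {1,-1,2,-2}` for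
right, left, top, bottom). -/
def onSide (l : ℕ) (j : ℤ) (v : Site) : Prop :=
  (j = 1 ∧ v.1 = lamHi l ∧ lamLo l - 1 ≤ v.2 ∧ v.2 ≤ lamHi l) ∨
  (j = -1 ∧ v.1 = lamLo l - 1 ∧ lamLo l - 1 ≤ v.2 ∧ v.2 ≤ lamHi l) ∨
  (j = 2 ∧ v.2 = lamHi l ∧ lamLo l - 1 ≤ v.1 ∧ v.1 ≤ lamHi l) ∨
  (j = -2 ∧ v.2 = lamLo l - 1 ∧ lamLo l - 1 ≤ v.1 ∧ v.1 ≤ lamHi l)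

/-- The set of dual bonds `γ` meets the side `F_l^j`. -/
def touches (l : ℕ) (j : ℤ) (γ : Finset DBond) : Prop :=
  ∃ e ∈ γ, ∃ v : Site, v ∈ e ∧ onSide l j v

def HorizCrossing (l : ℕ) (γ : Finset DBond) : Prop := touches l 1 γ ∧ touches l (-1) γ
def VertCrossing (l : ℕ) (γ : Finset DBond) : Prop := touches l 2 γ ∧ touches l (-2) γ

/-- `γ` is neither horizontally nor vertically crossing. -/
def NonCrossing (l : ℕ) (γ : Finset DBond) : Prop :=
  ¬ (HorizCrossing l γ ∨ VertCrossing l γ)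

/-- Two dual bonds are adjacent if they share a dual vertex. -/
def DAdj (a b : DBond) : Prop := ∃ v : Site, v ∈ a ∧ v ∈ b

/-- A set of dual bonds is connected (via shared dual vertices). -/
def DConn (S : Finset DBond) : Prop :=
  ∀ e ∈ S, ∀ f ∈ S, ∃ L : List DBond, L.Chain' DAdj ∧ L.head? = some e ∧
    L.getLast? = some f ∧ ∀ a ∈ L, a ∈ S

/-- Dual bonds separating `Θt` from `Λ(l) \ Θt` inside the lamBox. -/
noncomputable def interiorBdry (l : ℕ) (Θt : Finset Site) : Finset DBond :=
  Θt.biUnion fun x => ((nbrs x).filter fun y => y ∈ lamBox l ∧ y ∉ Θt).image fun y => dualBond x y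

/-- The sites of `Λ(l)` along the side `F_l^j`. -/
def sideSites (l : ℕ) (j : ℤ) (x : Site) : Prop :=
  x ∈ lamBox l ∧ ((j = 1 ∧ x.1 = lamHi l) ∨ (j = -1 ∧ x.1 = lamLo l) ∨
    (j = 2 ∧ x.2 = lamHi l) ∨ (j = -2 ∧ x.2 = lamLo l))

/-- The data of the distinguished connected component `γ̲ = γu` of `γ \ ∂Q(Λ(l))` and of the
region `Θ̃ = Θt` into which a non-crossing contour `γ = ∂Q(Θ)` divides the lamBox: `γu` is a
connected component of `γ \ ∂Q(Λ(l))` dividing `Λ(l)` into the `l¹`-connected pieces `Θt` and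
`Λ(l) \ Θt`, with `Θ ⊆ Θt` and `F_l^i ∪ F_l^j ⊆ ∂Q(Λ(l) \ Θt)` for untouched sides `i, j`. -/
def UnderlineData (l : ℕ) (Θ : Finset Site) (γu : Finset DBond) (Θt : Finset Site) : Prop :=
  γu ⊆ contourOf Θ \ boxBdry l ∧ DConn γu ∧
  (∀ e ∈ contourOf Θ \ boxBdry l, e ∉ γu → ∀ f ∈ γu, ¬ DAdj e f) ∧
  Θ ⊆ Θt ∧ Θt ⊆ lamBox l ∧ ConnIn d1 ↑Θt ∧ ConnIn d1 ↑(lamBox l \ Θt) ∧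
  interiorBdry l Θt = γu ∧
  ∃ i j : ℤ, (i = 1 ∨ i = -1) ∧ (j = 2 ∨ j = -2) ∧
    ¬ touches l i (contourOf Θ) ∧ ¬ touches l j (contourOf Θ) ∧
    (∀ x, sideSites l i x → x ∉ Θt) ∧ (∀ x, sideSites l j x → x ∉ Θt)

/-- `γ̄ = ∂Q(Λ(l)) ∩ ∂Q(Θ̃)`. -/
noncomputable def gammaBar (l : ℕ) (Θt : Finset Site) : Finset DBond := boxBdry l ∩ contourOf Θt

/-- `V_ex(γ)` : sites of the exterior boundary attached to dual bonds of `γ`. -/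
noncomputable def Vex (l : ℕ) (γ : Finset DBond) : Finset Site :=
  (lamBox l).biUnion fun x => (nbrs x).filter fun y => y ∉ lamBox l ∧ dualBond x y ∈ γ

/-- `T_Θ` : flip the spins in `Θ`. -/
def flipC (Θ : Finset Site) (σ : Site → ℤ) : Site → ℤ :=
  fun x => if x ∈ Θ then -σ x else σ x

/-- The Ising Hamiltonian `H^ω_{Λ(l)}(σ)` with boundary condition `ω`. -/
noncomputable def Ham (l : ℕ) (ω : Site → ℝ) (σ : Site → ℤ) : ℝ :=
  -(1/2) * ∑ x ∈ lamBox l, ∑ y ∈ (nbrs x).filter (· ∈ lamBox l), ((σ x * σ y : ℤ) : ℝ)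
    - ∑ x ∈ lamBox l, ∑ y ∈ (nbrs x).filter (· ∉ lamBox l), (σ x : ℝ) * ω y

/-- `Δ_{γ₁,…,γ_p} H^ω_{Λ(l)}(σ) = H(σ) - H(T_{γ₁}∘⋯∘T_{γ_p} σ)`, the contours being
recorded by their regions `Θ(γ_j)`. -/
noncomputable def dH (l : ℕ) (ω : Site → ℝ) (Θs : List (Finset Site)) (σ : Site → ℤ) : ℝ :=
  Ham l ω σ - Ham l ω (Θs.foldr flipC σ)

/-- `C` is an (ε)-cluster in `Λ(l)` at `σ` : a maximal `l¹`-connected component of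
`{x ∈ Λ(l) : σ_x = ε}`. -/
def IsCluster (l : ℕ) (σ : Site → ℤ) (ε : ℤ) (C : Finset Site) : Prop :=
  C.Nonempty ∧ (∀ x ∈ C, x ∈ lamBox l ∧ σ x = ε) ∧ ConnIn d1 ↑C ∧
  ∀ y ∈ lamBox l, σ y = ε → (∃ x ∈ C, d1 x y = 1) → y ∈ C

/-- The `l¹`-connected component of `x` within `S`. -/
def l1Comp (S : Set Site) (x : Site) : Set Site := {y | ChainIn d1 S x y}

/-- `C` together with the bounded components of its complement; `∂Q(fill C)` is the outer
boundary of `Q(C)`. -/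
def fill (C : Finset Site) : Set Site :=
  ↑C ∪ {x | (l1Comp ((↑C : Set Site)ᶜ) x).Finite}

/-- `Θ` is the region `Θ(γ)` of an (ε)-contour `γ` in `Λ(l)` at `σ`. -/
def IsEContour (l : ℕ) (σ : Site → ℤ) (ε : ℤ) (Θ : Finset Site) : Prop :=
  ∃ C : Finset Site, IsCluster l σ ε C ∧ (↑Θ : Set Site) = fill C

/-- A dual bond is horizontal. -/
def isHorizD (e : DBond) : Prop := ∃ v w : Site, e = s(v, w) ∧ v.2 = w.2

/-- A dual bond is vertical. -/
def isVertD (e : DBond) : Prop := ∃ v w : Site, e = s(v, w) ∧ v.1 = w.1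

open Classical in
/-- The number of horizontal dual bonds in `γ`. -/
noncomputable def horizCount (γ : Finset DBond) : ℕ := (γ.filter isHorizD).card

open Classical in
/-- The number of vertical dual bonds in `γ`. -/
noncomputable def vertCount (γ : Finset DBond) : ℕ := (γ.filter isVertD).card

/-! ### Glauber dynamics -/

/-- Configurations on a finite `Λ ⊂ ℤ²` (`true` = spin `+1`, `false` = spin `-1`). -/
abbrev Cfg (Λ : Finset Site) := ↥Λ → Bool

/-- The spin value of a Boolean. -/
def spinVal (b : Bool) : ℝ := if b then 1 else -1

/-- The Ising Hamiltonian on a general finite `Λ`. -/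
noncomputable def HamG (Λ : Finset Site) (ω : Site → ℝ) (σ : Cfg Λ) : ℝ :=
  -(1/2) * ∑ x : ↥Λ, ∑ y : ↥Λ, (if d1 ↑x ↑y = 1 then spinVal (σ x) * spinVal (σ y) else 0)
    - ∑ x : ↥Λ, ∑ y ∈ (nbrs ↑x).filter (· ∉ Λ), spinVal (σ x) * ω y

/-- The finite-volume Gibbs measure `μ^ω_Λ` at inverse temperature `β`. -/
noncomputable def gibbs (Λ : Finset Site) (ω : Site → ℝ) (β : ℝ) (σ : Cfg Λ) : ℝ :=
  Real.exp (-β * HamG Λ ω σ) / ∑ τ : Cfg Λ, Real.exp (-β * HamG Λ ω τ)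

/-- The mean of `f` under the weights `μ`. -/
noncomputable def meanW (Λ : Finset Site) (μ f : Cfg Λ → ℝ) : ℝ := ∑ σ : Cfg Λ, μ σ * f σ

/-- `σ^x` : flip the spin at `x`. -/
def flipAt (Λ : Finset Site) (σ : Cfg Λ) (x : ↥Λ) : Cfg Λ := Function.update σ x (!(σ x))

/-- The generator `A^ω_Λ` of the stochastic Ising model with flip rates `q`. -/
noncomputable def genA (Λ : Finset Site) (q : ↥Λ → Cfg Λ → ℝ) (f : Cfg Λ → ℝ) (σ : Cfg Λ) : ℝ :=
  ∑ x : ↥Λ, q x σ * (f (flipAt Λ σ x) - f σ)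

/-- The variance `μ(|f - μf|²)`. -/
noncomputable def varW (Λ : Finset Site) (μ f : Cfg Λ → ℝ) : ℝ :=
  meanW Λ μ (fun σ => |f σ - meanW Λ μ f| ^ 2)

/-- The spectral gap `gap(Λ, ω, β)` : the infimum of the Rayleigh quotients
`-μ(f A f) / μ(|f - μf|²)`. -/
noncomputable def specGap (Λ : Finset Site) (ω : Site → ℝ) (β : ℝ)
    (q : ↥Λ → Cfg Λ → ℝ) : ℝ :=
  sInf { r | ∃ f : Cfg Λ → ℝ, varW Λ (gibbs Λ ω β) f ≠ 0 ∧
    r = (- meanW Λ (gibbs Λ ω β) fun σ => f σ * genA Λ q f σ) / varW Λ (gibbs Λ ω β) f }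

/-- The `±1`-spin function of a configuration on `Λ(l)` (`0` outside the lamBox). -/
noncomputable def toSpin (l : ℕ) (σ : Cfg (lamBox l)) : Site → ℤ :=
  fun x => if h : x ∈ lamBox l then (if σ ⟨x, h⟩ then 1 else -1) else 0

/-- The magnetization at the origin, `μ^ω_{Λ(l)}(σ₀)`. -/
noncomputable def magZero (l : ℕ) (ω : Site → ℝ) (β : ℝ) : ℝ :=
  ∑ σ : Cfg (lamBox l), gibbs (lamBox l) ω β σ * ((toSpin l σ (0, 0) : ℤ) : ℝ)

/-- The favoured sign `ε_{l,ω}`. -/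
noncomputable def epsSign (l : ℕ) (ω : Site → ℝ) (β : ℝ) : ℤ :=
  if 0 ≤ magZero l ω β then 1 else -1

/-- The trap event `Γ_l` : some (ε)-contour `γ` at `σ` meets `∂Q(Λ(l))` and has
`|γ| ≥ 2δ₁ l`. -/
def GammaEvent (l : ℕ) (δ₁ : ℝ) (ε : ℤ) : Set (Cfg (lamBox l)) :=
  {σ | ∃ Θ : Finset Site, IsEContour l (toSpin l σ) ε Θ ∧
    (contourOf Θ ∩ boxBdry l).Nonempty ∧ 2 * δ₁ * l ≤ ((contourOf Θ).card : ℝ)}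

open Classical in
/-- The Gibbs probability of an event `S ⊂ Ω_{Λ(l)}`. -/
noncomputable def probOf (l : ℕ) (ω : Site → ℝ) (β : ℝ) (S : Set (Cfg (lamBox l))) : ℝ :=
  ∑ σ ∈ Finset.univ.filter (· ∈ S), gibbs (lamBox l) ω β σ

/-- Union of the contours of a list of regions. -/
def unionB (L : List (Finset Site)) : Finset DBond :=
  L.foldr (fun Θ s => contourOf Θ ∪ s) ∅

/-- Union of a list of regions. -/
def unionR (L : List (Finset Site)) : Finset Site :=
  L.foldr (· ∪ ·) ∅

section Aux

lemma mem_nbrs_iff {x y : Site} : y ∈ nbrs x ↔ d1 x y = 1 := by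
  simp only [nbrs, d1, Finset.mem_insert, Finset.mem_singleton, Prod.ext_iff]
  constructor
  · rintro (⟨h1, h2⟩ | ⟨h1, h2⟩ | ⟨h1, h2⟩ | ⟨h1, h2⟩) <;>
      simp [h1, h2, Int.abs_eq_natAbs] <;> omega
  · intro h
    rw [Int.abs_eq_natAbs, Int.abs_eq_natAbs] at h
    omega

lemma d1_comm (x y : Site) : d1 x y = d1 y x := by
  simp [d1, abs_sub_comm]

lemma d1_cases {x y : Site} (h : d1 x y = 1) :
    (x.2 = y.2 ∧ (x.1 = y.1 + 1 ∨ y.1 = x.1 + 1)) ∨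
    (x.1 = y.1 ∧ (x.2 = y.2 + 1 ∨ y.2 = x.2 + 1)) := by
  simp only [d1, Int.abs_eq_natAbs] at h
  omega

lemma dualBond_horiz {x y : Site} (h : x.2 = y.2) :
    dualBond x y = s((min x.1 y.1, x.2 - 1), (min x.1 y.1, x.2)) := by
  simp [dualBond, h]

lemma dualBond_vert {x y : Site} (h : ¬ x.2 = y.2) :
    dualBond x y = s((x.1 - 1, min x.2 y.2), (x.1, min x.2 y.2)) := by
  simp [dualBond, h]

lemma dualBond_symm {x y : Site} (h : d1 x y = 1) : dualBond x y = dualBond y x := by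
  rcases d1_cases h with ⟨h1, h2⟩ | ⟨h1, h2⟩
  · rw [dualBond_horiz h1, dualBond_horiz h1.symm, min_comm, h1]
  · have hne : ¬ x.2 = y.2 := by omega
    rw [dualBond_vert hne, dualBond_vert (fun hh => hne hh.symm), min_comm, h1]

lemma dualBond_inj {x y a b : Site} (hxy : d1 x y = 1) (hab : d1 a b = 1)
    (h : dualBond x y = dualBond a b) : (a = x ∧ b = y) ∨ (a = y ∧ b = x) := by
  rcases d1_cases hxy with ⟨h1, h2⟩ | ⟨h1, h2⟩ <;> rcases d1_cases hab with ⟨g1, g2⟩ | ⟨g1, g2⟩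
  · rw [dualBond_horiz h1, dualBond_horiz g1, Sym2.eq_iff] at h
    simp only [Prod.ext_iff, Prod.ext_iff, min_def] at h
    simp only [Prod.ext_iff]
    split_ifs at h <;> omega
  · have g2' : ¬ a.2 = b.2 := by omega
    rw [dualBond_horiz h1, dualBond_vert g2', Sym2.eq_iff] at h
    simp only [Prod.ext_iff, min_def] at h
    split_ifs at h <;> omega
  · have h2' : ¬ x.2 = y.2 := by omega
    rw [dualBond_vert h2', dualBond_horiz g1, Sym2.eq_iff] at h
    simp only [Prod.ext_iff, min_def] at h
    split_ifs at h <;> omega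
  · have h2' : ¬ x.2 = y.2 := by omega
    have g2' : ¬ a.2 = b.2 := by omega
    rw [dualBond_vert h2', dualBond_vert g2', Sym2.eq_iff] at h
    simp only [Prod.ext_iff, min_def] at h
    simp only [Prod.ext_iff]
    split_ifs at h <;> omega

lemma mem_contourOf_iff {Θ : Finset Site} {x y : Site} (hxy : d1 x y = 1) :
    dualBond x y ∈ contourOf Θ ↔ (x ∈ Θ ∧ y ∉ Θ) ∨ (y ∈ Θ ∧ x ∉ Θ) := by
  constructor
  · intro h
    simp only [contourOf, Finset.mem_biUnion, Finset.mem_image, Finset.mem_filter] at h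
    obtain ⟨a, ha, b, ⟨hb, hbn⟩, hd⟩ := h
    have hab : d1 a b = 1 := mem_nbrs_iff.1 hb
    rcases dualBond_inj hxy hab hd.symm with ⟨rfl, rfl⟩ | ⟨rfl, rfl⟩
    · exact Or.inl ⟨ha, hbn⟩
    · exact Or.inr ⟨ha, hbn⟩
  · rintro (⟨hx, hy⟩ | ⟨hy, hx⟩)
    · simp only [contourOf, Finset.mem_biUnion, Finset.mem_image, Finset.mem_filter]
      exact ⟨x, hx, y, ⟨mem_nbrs_iff.2 hxy, hy⟩, rfl⟩
    · simp only [contourOf, Finset.mem_biUnion, Finset.mem_image, Finset.mem_filter]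
      exact ⟨y, hy, x, ⟨mem_nbrs_iff.2 (d1_comm x y ▸ hxy), hx⟩,
        (dualBond_symm hxy).symm ▸ (dualBond_symm hxy) ▸ rfl⟩

end Aux

section Chains

lemma ChainIn.mem_start {d : Site → Site → ℤ} {S : Set Site} {x y : Site}
    (h : ChainIn d S x y) : x ∈ S := by
  obtain ⟨L, _, hh, _, hmem⟩ := h
  exact hmem x (List.mem_of_mem_head? hh)

lemma ChainIn.prepend {S : Set Site} {x y z : Site}
    (h : ChainIn d1 S y z) (hx : x ∈ S) (hxy : d1 x y = 1) : ChainIn d1 S x z := by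
  obtain ⟨L, hch, hh, hl, hmem⟩ := h
  refine ⟨x :: L, ?_, rfl, ?_, ?_⟩
  · change List.IsChain _ (x :: L)
    rw [List.isChain_cons]
    refine ⟨fun b hb => ?_, hch⟩
    rw [hh] at hb; cases hb; exact hxy
  · cases L with
    | nil => simp at hh
    | cons a L' => rw [List.getLast?_cons_cons]; exact hl
  · intro a ha
    rcases List.mem_cons.1 ha with rfl | ha
    · exact hx
    · exact hmem a ha

lemma ChainIn.extend {S : Set Site} {x y z : Site}
    (h : ChainIn d1 S x y) (hz : z ∈ S) (hyz : d1 y z = 1) : ChainIn d1 S x z := by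
  obtain ⟨L, hch, hh, hl, hmem⟩ := h
  refine ⟨L ++ [z], ?_, ?_, ?_, ?_⟩
  · refine List.IsChain.append hch (List.isChain_singleton z) ?_
    intro a ha b hb
    rw [hl] at ha; rw [List.head?_cons] at hb
    cases ha; cases hb; exact hyz
  · cases L with
    | nil => simp at hh
    | cons a L' => simpa using hh
  · simp
  · intro a ha
    rcases List.mem_append.1 ha with ha | ha
    · exact hmem a ha
    · rcases List.mem_singleton.1 ha with rfl; exact hz

lemma ChainIn.refl {S : Set Site} {x : Site} (hx : x ∈ S) : ChainIn d1 S x x :=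
  ⟨[x], List.isChain_singleton x, rfl, rfl, by simpa using hx⟩

lemma l1Comp_infinite_of_ray {S : Set Site} {x e : Site}
    (he : e = (1,0) ∨ e = (-1,0) ∨ e = (0,1) ∨ e = (0,-1))
    (hS : ∀ t : ℕ, (x.1 + t * e.1, x.2 + t * e.2) ∈ S) : (l1Comp S x).Infinite := by
  set f : ℕ → Site := fun t => (x.1 + t * e.1, x.2 + t * e.2) with hf
  have hinj : Function.Injective f := by
    intro s t hst
    simp only [hf, Prod.ext_iff] at hst
    rcases he with rfl | rfl | rfl | rfl <;> simp at hst <;> omega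
  have hmem : ∀ t, f t ∈ l1Comp S x := by
    intro t
    induction t with
    | zero =>
      have : f 0 = x := by simp [hf]
      rw [this]
      exact ChainIn.refl (by simpa using hS 0)
    | succ t ih =>
      refine ChainIn.extend ih (hS (t+1)) ?_
      simp only [hf, d1]
      rcases he with rfl | rfl | rfl | rfl <;> push_cast <;> simp <;> ring_nf <;>
        simp [Int.abs_eq_natAbs] <;> omega
  exact Set.infinite_of_injective_forall_mem hinj hmem

lemma mem_lamBox_iff {l : ℕ} {x : Site} :
    x ∈ lamBox l ↔ lamLo l ≤ x.1 ∧ x.1 ≤ lamHi l ∧ lamLo l ≤ x.2 ∧ x.2 ≤ lamHi l := by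
  simp only [lamBox, Finset.mem_Icc, Prod.le_def]
  tauto

lemma fill_subset_box {l : ℕ} {C : Finset Site} (hC : ∀ x ∈ C, x ∈ lamBox l) :
    fill C ⊆ {x | x ∈ lamBox l} := by
  intro x hx
  by_contra hxb
  have hxC : x ∉ C := fun h => hxb (hC x h)
  rcases hx with hx | hx
  · exact hxC hx
  · have hray : ∃ e : Site, (e = (1,0) ∨ e = (-1,0) ∨ e = (0,1) ∨ e = (0,-1)) ∧
        ∀ t : ℕ, (x.1 + t * e.1, x.2 + t * e.2) ∉ lamBox l := by
      simp only [Set.mem_setOf_eq, mem_lamBox_iff] at hxb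
      push_neg at hxb
      by_cases h1 : lamLo l ≤ x.1
      · by_cases h2 : x.1 ≤ lamHi l
        · by_cases h3 : lamLo l ≤ x.2
          · have h4 : lamHi l < x.2 := hxb h1 h2 h3
            exact ⟨(0,1), by tauto, fun t ht => by
              rw [mem_lamBox_iff] at ht; simp at ht; omega⟩
          · exact ⟨(0,-1), by tauto, fun t ht => by
              rw [mem_lamBox_iff] at ht; simp at ht; omega⟩
        · exact ⟨(1,0), by tauto, fun t ht => by
            rw [mem_lamBox_iff] at ht; simp at ht; omega⟩
      · exact ⟨(-1,0), by tauto, fun t ht => by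
          rw [mem_lamBox_iff] at ht; simp at ht; omega⟩
    obtain ⟨e, he, hrb⟩ := hray
    have : (l1Comp ((↑C : Set Site)ᶜ) x).Infinite := by
      refine l1Comp_infinite_of_ray he fun t => ?_
      intro hmem
      exact hrb t (hC _ hmem)
    exact this hx

lemma bdry_mem_cluster {C : Finset Site} {x y : Site}
    (hx : x ∈ fill C) (hy : y ∉ fill C) (hxy : d1 x y = 1) : x ∈ C := by
  by_contra hxC
  have hxfin : (l1Comp ((↑C : Set Site)ᶜ) x).Finite := by
    rcases hx with hx | hx
    · exact absurd hx hxC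
    · exact hx
  have hyC : y ∉ C := fun h => hy (Or.inl h)
  have hsub : l1Comp ((↑C : Set Site)ᶜ) y ⊆ l1Comp ((↑C : Set Site)ᶜ) x := by
    intro z hz
    exact ChainIn.prepend hz hxC hxy
  exact hy (Or.inr (hxfin.subset hsub))

lemma cluster_absorb_chain {l : ℕ} {τ : Site → ℤ} {ε : ℤ} {C : Finset Site}
    (h : IsCluster l τ ε C) :
    ∀ (L : List Site), L.Chain' (fun a b => d1 a b = 1) →
      (∀ a ∈ L, a ∈ lamBox l ∧ τ a = ε) →
      ∀ h0, L.head? = some h0 → h0 ∈ C → ∀ a ∈ L, a ∈ C := by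
  intro L
  induction L with
  | nil => intro _ _ h0 hh; simp at hh
  | cons a L ih =>
    intro hch hmem h0 hh ha0 b hb
    rw [List.head?_cons, Option.some_inj] at hh
    subst hh
    rcases List.mem_cons.1 hb with rfl | hb
    · exact ha0
    · cases L with
      | nil => simp at hb
      | cons c L' =>
        change List.IsChain _ (a :: c :: L') at hch
        rw [List.isChain_cons_cons] at hch
        have hc : c ∈ C := by
          have hcm := hmem c (by simp)
          exact h.2.2.2 c hcm.1 hcm.2 ⟨a, ha0, hch.1⟩
        exact ih hch.2 (fun z hz => hmem z (List.mem_cons_of_mem _ hz)) c rfl hc b hb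

lemma cluster_eq_of_mem {l : ℕ} {τ : Site → ℤ} {ε : ℤ} {C1 C2 : Finset Site}
    (h1 : IsCluster l τ ε C1) (h2 : IsCluster l τ ε C2) {x : Site}
    (hx1 : x ∈ C1) (hx2 : x ∈ C2) : C1 = C2 := by
  have key : ∀ (D1 D2 : Finset Site), IsCluster l τ ε D1 → IsCluster l τ ε D2 →
      ∀ z, z ∈ D1 → z ∈ D2 → D1 ⊆ D2 := by
    intro D1 D2 g1 g2 z hz1 hz2 y hy
    obtain ⟨L, hch, hh, hl, hmem⟩ := g1.2.2.1 z hz1 y hy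
    exact cluster_absorb_chain g2 L hch (fun a ha => g1.2.1 a (hmem a ha)) z hh hz2 y
      (List.mem_of_mem_getLast? hl)
  exact Finset.Subset.antisymm (key C1 C2 h1 h2 x hx1 hx2) (key C2 C1 h2 h1 x hx2 hx1)

end Chains

section Flip

lemma foldr_flipC (L : List (Finset Site)) (σ : Site → ℤ) (x : Site) :
    (L.foldr flipC σ) x = (-1) ^ (L.countP fun Θ => decide (x ∈ Θ)) * σ x := by
  induction L with
  | nil => simp
  | cons Θ L ih =>
    simp only [List.foldr_cons, List.countP_cons, flipC]
    by_cases h : x ∈ Θ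
    · simp [h, ih, pow_succ]
    · simp [h, ih]

lemma countP_ofFn {n : ℕ} (f : Fin n → Finset Site) (p : Finset Site → Bool) :
    (List.ofFn f).countP p = ∑ j, if p (f j) then 1 else 0 := by
  induction n with
  | zero => simp
  | succ n ih =>
    rw [List.ofFn_succ, List.countP_cons, Fin.sum_univ_succ, ih]
    by_cases h : p (f 0) <;> simp [h] <;> omega

end Flip

/-- For (ε)-contours `γ′₁,…,γ′_n` at `τ` in `Λ(l)` none of which meets
`∂Q(Λ(l))`: `Δ_{γ′₁,…,γ′_n}H^ω(τ) = 2 ∑_j |γ′_j|`. -/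
theorem stmt16 (l : ℕ) (τ : Site → ℤ) (hτ : ∀ x ∈ lamBox l, τ x = 1 ∨ τ x = -1)
    (ε : ℤ) (hε : ε = 1 ∨ ε = -1) (ω : Site → ℝ)
    (n : ℕ) (Θs : Fin n → Finset Site)
    (hcs : ∀ j, IsEContour l τ ε (Θs j)) (hinj : Function.Injective Θs)
    (hb : ∀ j, contourOf (Θs j) ∩ boxBdry l = ∅) :
    dH l ω (List.ofFn Θs) τ = 2 * ∑ j, ((contourOf (Θs j)).card : ℝ) := by
  classical
  choose C hC using hcs
  have hfill : ∀ j, (↑(Θs j) : Set Site) = fill (C j) := fun j => (hC j).2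
  have hΘbox : ∀ j, ∀ x ∈ Θs j, x ∈ lamBox l := by
    intro j x hx
    have hsub := fill_subset_box (l := l) (C := C j) (fun y hy => ((hC j).1.2.1 y hy).1)
    have hx' : x ∈ fill (C j) := by rw [← hfill j]; exact hx
    exact hsub hx'
  -- key boundary fact
  have key : ∀ j, ∀ x y : Site, x ∈ Θs j → y ∉ Θs j → d1 x y = 1 →
      x ∈ lamBox l ∧ y ∈ lamBox l ∧ x ∈ C j ∧ τ x = ε ∧ τ y ≠ ε := by
    intro j x y hx hy hxy
    have hxf : x ∈ fill (C j) := by rw [← hfill j]; exact hx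
    have hyf : y ∉ fill (C j) := by rw [← hfill j]; exact hy
    have hxC : x ∈ C j := bdry_mem_cluster hxf hyf hxy
    have hxb : x ∈ lamBox l := ((hC j).1.2.1 x hxC).1
    have hτx : τ x = ε := ((hC j).1.2.1 x hxC).2
    have hyb : y ∈ lamBox l := by
      by_contra hyn
      have h1 : dualBond x y ∈ contourOf (Θs j) := (mem_contourOf_iff hxy).2 (Or.inl ⟨hx, hy⟩)
      have h2 : dualBond x y ∈ boxBdry l := (mem_contourOf_iff hxy).2 (Or.inl ⟨hxb, hyn⟩)
      have h3 := hb j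
      rw [Finset.eq_empty_iff_forall_notMem] at h3
      exact h3 _ (Finset.mem_inter.2 ⟨h1, h2⟩)
    refine ⟨hxb, hyb, hxC, hτx, fun hτy => ?_⟩
    have hyC : y ∈ C j := (hC j).1.2.2.2 y hyb hτy ⟨x, hxC, hxy⟩
    exact hy (by rw [← Finset.mem_coe, hfill j]; exact Or.inl hyC)
  -- uniqueness of the crossed contour
  have cross_unique : ∀ x y : Site, d1 x y = 1 → ∀ j k, dualBond x y ∈ contourOf (Θs j) →
      dualBond x y ∈ contourOf (Θs k) → j = k := by
    intro x y hxy j k hj hk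
    have hyx : d1 y x = 1 := (d1_comm x y) ▸ hxy
    have hCeq : ∀ j' k' : Fin n, C j' = C k' → j' = k' := by
      intro j' k' h
      apply hinj
      apply Finset.coe_injective
      rw [hfill j', hfill k', h]
    rcases (mem_contourOf_iff hxy).1 hj with ⟨hxj, hyj⟩ | ⟨hyj, hxj⟩ <;>
      rcases (mem_contourOf_iff hxy).1 hk with ⟨hxk, hyk⟩ | ⟨hyk, hxk⟩
    · exact hCeq j k (cluster_eq_of_mem (hC j).1 (hC k).1
        (key j x y hxj hyj hxy).2.2.1 (key k x y hxk hyk hxy).2.2.1)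
    · exact absurd ((hC k).1.2.1 y (key k y x hyk hxk hyx).2.2.1).2
        (key j x y hxj hyj hxy).2.2.2.2
    · exact absurd ((hC k).1.2.1 x (key k x y hxk hyk hxy).2.2.1).2
        (key j y x hyj hxj hyx).2.2.2.2
    · exact hCeq j k (cluster_eq_of_mem (hC j).1 (hC k).1
        (key j y x hyj hxj hyx).2.2.1 (key k y x hyk hxk hyx).2.2.1)
  set σ' : Site → ℤ := (List.ofFn Θs).foldr flipC τ with hσ'def
  set cnt : Site → ℕ := fun x => (Finset.univ.filter fun j => x ∈ Θs j).card with hcnt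
  have hσ'x : ∀ x, σ' x = (-1) ^ (cnt x) * τ x := by
    intro x
    rw [hσ'def, foldr_flipC]
    congr 1
    rw [countP_ofFn, hcnt]
    simp only [Finset.card_filter, decide_eq_true_eq]
  -- no site with a neighbour outside the box is flipped
  have hnoflip : ∀ x, (∀ j, x ∉ Θs j) → σ' x = τ x := by
    intro x hx
    rw [hσ'x x]
    have h0 : cnt x = 0 := by
      rw [hcnt]
      simp only [Finset.card_eq_zero, Finset.filter_eq_empty_iff]
      exact fun j _ => hx j
    rw [h0, pow_zero, one_mul]
  have hbdx : ∀ x y : Site, y ∈ nbrs x → y ∉ lamBox l → σ' x = τ x := by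
    intro x y hy hyn
    refine hnoflip x fun j hxj => ?_
    have hyj : y ∉ Θs j := fun h => hyn (hΘbox j y h)
    have hxy : d1 x y = 1 := mem_nbrs_iff.1 hy
    exact hyn (key j x y hxj hyj hxy).2.1
  -- the parity of flips across a bond
  have hpow : ∀ x y : Site, d1 x y = 1 → ((-1 : ℤ)) ^ (cnt x + cnt y) =
      (-1) ^ ((Finset.univ.filter fun j => dualBond x y ∈ contourOf (Θs j)).card) := by
    intro x y hxy
    have h1 : cnt x + cnt y =
        ∑ j : Fin n, ((if x ∈ Θs j then 1 else 0) + (if y ∈ Θs j then 1 else 0)) := by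
      rw [Finset.sum_add_distrib, hcnt]
      simp only [Finset.card_filter]
    rw [h1, Finset.card_filter, ← Finset.prod_pow_eq_pow_sum, ← Finset.prod_pow_eq_pow_sum]
    refine Finset.prod_congr rfl fun j _ => ?_
    have hcross := mem_contourOf_iff (Θ := Θs j) hxy
    by_cases hx : x ∈ Θs j <;> by_cases hy : y ∈ Θs j <;>
      simp [hx, hy, hcross] <;> norm_num
  -- the per-bond energy difference
  have pair_diff : ∀ x y : Site, d1 x y = 1 → x ∈ lamBox l → y ∈ lamBox l →
      (τ x * τ y : ℤ) - σ' x * σ' y =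
        -2 * ((Finset.univ.filter fun j => dualBond x y ∈ contourOf (Θs j)).card : ℤ) := by
    intro x y hxy hx hy
    rw [hσ'x x, hσ'x y]
    have hrearr : ((-1 : ℤ) ^ (cnt x) * τ x) * ((-1) ^ (cnt y) * τ y) =
        (-1) ^ (cnt x + cnt y) * (τ x * τ y) := by rw [pow_add]; ring
    rw [hrearr, hpow x y hxy]
    set m := (Finset.univ.filter fun j => dualBond x y ∈ contourOf (Θs j)).card with hm
    have hm1 : m ≤ 1 := by
      rw [hm, Finset.card_le_one]
      intro a ha b hb
      simp only [Finset.mem_filter, Finset.mem_univ, true_and] at ha hb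
      exact cross_unique x y hxy a b ha hb
    have hm01 : m = 0 ∨ m = 1 := by omega
    rcases hm01 with h0 | h1
    · rw [h0]; norm_num
    · obtain ⟨j, hj⟩ := Finset.card_eq_one.1 (hm ▸ h1)
      have hjmem : dualBond x y ∈ contourOf (Θs j) := by
        have : j ∈ Finset.univ.filter fun j => dualBond x y ∈ contourOf (Θs j) := by
          rw [hj]; exact Finset.mem_singleton_self j
        simpa using this
      have hττ : τ x * τ y = -1 := by
        rcases (mem_contourOf_iff hxy).1 hjmem with ⟨hxin, hyout⟩ | ⟨hyin, hxout⟩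
        · have hk := key j x y hxin hyout hxy
          have h2 : τ y = -ε := by
            rcases hτ y hy with h | h <;> rcases hε with rfl | rfl <;>
              first | (exact absurd h hk.2.2.2.2) | omega
          rw [hk.2.2.2.1, h2]
          rcases hε with rfl | rfl <;> norm_num
        · have hyx : d1 y x = 1 := (d1_comm x y) ▸ hxy
          have hk := key j y x hyin hxout hyx
          have h2 : τ x = -ε := by
            rcases hτ x hx with h | h <;> rcases hε with rfl | rfl <;>
              first | (exact absurd h hk.2.2.2.2) | omega
          rw [hk.2.2.2.1, h2]
          rcases hε with rfl | rfl <;> norm_num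
      rw [h1, hττ]; norm_num
  -- counting crossing pairs of a single contour
  have count_j : ∀ j : Fin n, (∑ x ∈ lamBox l, ∑ y ∈ (nbrs x).filter (· ∈ lamBox l),
      if dualBond x y ∈ contourOf (Θs j) then 1 else 0) = 2 * (contourOf (Θs j)).card := by
    intro j
    set γ := contourOf (Θs j) with hγ
    set g : Site → Finset Site :=
      fun x => (nbrs x).filter (fun y => y ∈ lamBox l ∧ dualBond x y ∈ γ) with hg
    have hinner : ∀ x : Site, (∑ y ∈ (nbrs x).filter (· ∈ lamBox l),
        if dualBond x y ∈ γ then 1 else 0) = (g x).card := by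
      intro x
      rw [Finset.sum_filter, Finset.card_filter]
      refine Finset.sum_congr rfl fun y _ => ?_
      by_cases h1 : y ∈ lamBox l <;> by_cases h2 : dualBond x y ∈ γ <;> simp [h1, h2]
    rw [Finset.sum_congr rfl fun x _ => hinner x, ← Finset.card_sigma]
    have hmap : ∀ p ∈ (lamBox l).sigma g, (fun p : (_ : Site) × Site => dualBond p.1 p.2) p ∈ γ := by
      intro p hp
      rw [Finset.mem_sigma] at hp
      exact ((Finset.mem_filter.1 hp.2).2).2
    rw [Finset.card_eq_sum_card_fiberwise hmap]
    have hfib : ∀ e ∈ γ, (((lamBox l).sigma g).filter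
        fun p : (_ : Site) × Site => dualBond p.1 p.2 = e).card = 2 := by
      intro e he
      have he' := he
      rw [hγ] at he'
      simp only [contourOf, Finset.mem_biUnion, Finset.mem_image, Finset.mem_filter] at he'
      obtain ⟨a, haΘ, b, ⟨hbn, hbΘ⟩, hd⟩ := he'
      have hab : d1 a b = 1 := mem_nbrs_iff.1 hbn
      have hba : d1 b a = 1 := (d1_comm a b) ▸ hab
      have hk := key j a b haΘ hbΘ hab
      have hane : a ≠ b := by
        intro h; rw [h] at hab; simp [d1] at hab
      have hset : (((lamBox l).sigma g).filter
          fun p : (_ : Site) × Site => dualBond p.1 p.2 = e) = {⟨a, b⟩, ⟨b, a⟩} := by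
        ext p
        obtain ⟨p1, p2⟩ := p
        simp only [Finset.mem_filter, Finset.mem_sigma, Finset.mem_insert,
          Finset.mem_singleton, hg]
        constructor
        · rintro ⟨⟨hp1, hp2⟩, hpd⟩
          have hp12 : d1 p1 p2 = 1 := mem_nbrs_iff.1 hp2.1
          have heq : dualBond p1 p2 = dualBond a b := by rw [hpd, ← hd]
          rcases dualBond_inj hp12 hab heq with ⟨h1, h2⟩ | ⟨h1, h2⟩
          · left; rw [h1, h2]
          · right; rw [h1, h2]
        · rintro (h | h) <;> (injection h with h1 h2; subst h1; subst h2)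
          · exact ⟨⟨hk.1, hbn, hk.2.1, by rw [hd]; exact he⟩, hd⟩
          · refine ⟨⟨hk.2.1, mem_nbrs_iff.2 hba, hk.1, ?_⟩, ?_⟩
            · rw [dualBond_symm hba, hd]; exact he
            · rw [dualBond_symm hba, hd]
      rw [hset]
      refine Finset.card_pair fun h => hane ?_
      exact congrArg Sigma.fst h
    rw [Finset.sum_congr rfl hfib, Finset.sum_const, smul_eq_mul, mul_comm]
  -- assembling the Hamiltonian difference
  have hBeq : (∑ x ∈ lamBox l, ∑ y ∈ (nbrs x).filter (· ∉ lamBox l), (σ' x : ℝ) * ω y)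
      = ∑ x ∈ lamBox l, ∑ y ∈ (nbrs x).filter (· ∉ lamBox l), (τ x : ℝ) * ω y := by
    refine Finset.sum_congr rfl fun x hx => Finset.sum_congr rfl fun y hy => ?_
    rw [Finset.mem_filter] at hy
    rw [hbdx x y hy.1 hy.2]
  have hAeq : (∑ x ∈ lamBox l, ∑ y ∈ (nbrs x).filter (· ∈ lamBox l), ((τ x * τ y : ℤ) : ℝ))
      - (∑ x ∈ lamBox l, ∑ y ∈ (nbrs x).filter (· ∈ lamBox l), ((σ' x * σ' y : ℤ) : ℝ))
      = -2 * ∑ x ∈ lamBox l, ∑ y ∈ (nbrs x).filter (· ∈ lamBox l),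
          ((Finset.univ.filter fun j => dualBond x y ∈ contourOf (Θs j)).card : ℝ) := by
    rw [Finset.mul_sum, ← Finset.sum_sub_distrib]
    refine Finset.sum_congr rfl fun x hx => ?_
    rw [Finset.mul_sum, ← Finset.sum_sub_distrib]
    refine Finset.sum_congr rfl fun y hy => ?_
    rw [Finset.mem_filter] at hy
    have hd := pair_diff x y (mem_nbrs_iff.1 hy.1) hx hy.2
    have : (((τ x * τ y : ℤ) : ℝ)) - ((σ' x * σ' y : ℤ) : ℝ)
        = (((τ x * τ y - σ' x * σ' y : ℤ)) : ℝ) := by push_cast; ring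
    rw [this, hd]
    push_cast
    ring
  have hmain : dH l ω (List.ofFn Θs) τ
      = ∑ x ∈ lamBox l, ∑ y ∈ (nbrs x).filter (· ∈ lamBox l),
          ((Finset.univ.filter fun j => dualBond x y ∈ contourOf (Θs j)).card : ℝ) := by
    unfold dH Ham
    rw [← hσ'def, hBeq]
    linear_combination (-(1/2) : ℝ) * hAeq
  rw [hmain]
  -- swap sums and count
  have hswap : ∑ x ∈ lamBox l, ∑ y ∈ (nbrs x).filter (· ∈ lamBox l),
      ((Finset.univ.filter fun j => dualBond x y ∈ contourOf (Θs j)).card : ℝ)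
      = ∑ j : Fin n, ∑ x ∈ lamBox l, ∑ y ∈ (nbrs x).filter (· ∈ lamBox l),
          (if dualBond x y ∈ contourOf (Θs j) then (1 : ℝ) else 0) := by
    have hcard : ∀ x y : Site,
        ((Finset.univ.filter fun j => dualBond x y ∈ contourOf (Θs j)).card : ℝ)
        = ∑ j : Fin n, (if dualBond x y ∈ contourOf (Θs j) then (1 : ℝ) else 0) := by
      intro x y
      rw [Finset.card_filter]
      push_cast
      exact Finset.sum_congr rfl fun j _ => by by_cases h : dualBond x y ∈ contourOf (Θs j) <;> simp [h]
    rw [Finset.sum_congr rfl fun x _ => Finset.sum_congr rfl fun y _ => hcard x y]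
    rw [Finset.sum_congr rfl fun x (_ : x ∈ lamBox l) => Finset.sum_comm]
    exact Finset.sum_comm
  rw [hswap, Finset.mul_sum]
  refine Finset.sum_congr rfl fun j _ => ?_
  have hcast : ∑ x ∈ lamBox l, ∑ y ∈ (nbrs x).filter (· ∈ lamBox l),
      (if dualBond x y ∈ contourOf (Θs j) then (1 : ℝ) else 0)
      = ((∑ x ∈ lamBox l, ∑ y ∈ (nbrs x).filter (· ∈ lamBox l),
          if dualBond x y ∈ contourOf (Θs j) then 1 else 0 : ℕ) : ℝ) := by
    push_cast
    refine Finset.sum_congr rfl fun x _ => Finset.sum_congr rfl fun y _ => ?_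
    by_cases h : dualBond x y ∈ contourOf (Θs j) <;> simp [h]
  rw [hcast, count_j j]
  push_cast
  ring
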